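/- Let β ∈ (0,1), η₀ > 0, and define η_u = η₀/√u for positive integers u. Then for every integer t ≥ 2, the exponentially weighted step-size sum satisfies Σ_{u=1}^{t−1} η_u · β^{t−u} ≤ (η₀/(1−β))·β^{⌊t/2⌋} + (√2·η₀·β/(1−β))·(1/√t). -/

import Mathlib

lemma geom_aux (β : ℝ) (h0 : 0 ≤ β) (h1 : β < 1) (n c : ℕ) :
    ∑ i ∈ Finset.range n, β ^ (c + i) ≤ β ^ c / (1 - β) := by
  have h1β : 0 < 1 - β := by linarith
  have heq : ∑ i ∈ Finset.range n, β ^ (c + i) = β ^ c * ∑ i ∈ Finset.range n, β ^ i := by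
    rw [Finset.mul_sum]
    exact Finset.sum_congr rfl fun i _ => by rw [pow_add]
  rw [heq, div_eq_mul_one_div]
  refine mul_le_mul_of_nonneg_left ?_ (pow_nonneg h0 c)
  have hg : ∑ i ∈ Finset.range n, β ^ i = (1 - β ^ n) / (1 - β) := by
    rw [geom_sum_eq (by linarith : β ≠ 1)]
    rw [div_eq_div_iff (by linarith) (by linarith)]
    ring
  rw [hg]
  rw [div_le_div_iff₀ h1β h1β]
  nlinarith [pow_nonneg h0 n]

lemma tail_sum (β : ℝ) (h0 : 0 ≤ β) (h1 : β < 1) (a b t : ℕ) (hab : a ≤ b) (hbt : b ≤ t) :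
    ∑ u ∈ Finset.Ioc a b, β ^ (t - u) ≤ β ^ (t - b) / (1 - β) := by
  have key : ∑ u ∈ Finset.Ioc a b, β ^ (t - u)
      = ∑ i ∈ Finset.range (b - a), β ^ ((t - b) + i) := by
    rw [← Finset.Icc_add_one_left_eq_Ioc, ← Finset.Ico_add_one_right_eq_Icc, Finset.sum_Ico_eq_sum_range]
    have hn : b + 1 - (a + 1) = b - a := by omega
    rw [hn, ← Finset.sum_range_reflect]
    refine Finset.sum_congr rfl fun j hj => ?_
    have hj' : j < b - a := Finset.mem_range.mp hj
    congr 1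
    omega
  rw [key]
  exact geom_aux β h0 h1 _ _

theorem weighted_stepsize_sum_bound (β η₀ : ℝ) (hβ : β ∈ Set.Ioo (0 : ℝ) 1) (hη₀ : 0 < η₀)
    (t : ℕ) (ht : 2 ≤ t) :
    ∑ u ∈ Finset.Icc 1 (t - 1), (η₀ / Real.sqrt u) * β ^ (t - u) ≤
      η₀ / (1 - β) * β ^ (t / 2) +
        Real.sqrt 2 * η₀ * β / (1 - β) * (1 / Real.sqrt t) := by
  obtain ⟨hβ0, hβ1⟩ := hβ
  have h1β : 0 < 1 - β := by linarith
  have hmt : t / 2 ≤ t - 1 := by omega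
  have hsplit : ∑ u ∈ Finset.Icc 1 (t - 1), (η₀ / Real.sqrt u) * β ^ (t - u)
      = ∑ u ∈ Finset.Ioc 0 (t / 2), (η₀ / Real.sqrt u) * β ^ (t - u)
      + ∑ u ∈ Finset.Ioc (t / 2) (t - 1), (η₀ / Real.sqrt u) * β ^ (t - u) := by
    rw [← Finset.Icc_add_one_left_eq_Ioc (a := 0)]
    exact (Finset.sum_Ioc_consecutive _ (Nat.zero_le _) hmt).symm
  rw [hsplit]
  have hb1 : ∑ u ∈ Finset.Ioc 0 (t / 2), (η₀ / Real.sqrt u) * β ^ (t - u)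
      ≤ η₀ / (1 - β) * β ^ (t / 2) := by
    have step1 : ∑ u ∈ Finset.Ioc 0 (t / 2), (η₀ / Real.sqrt u) * β ^ (t - u)
        ≤ ∑ u ∈ Finset.Ioc 0 (t / 2), η₀ * β ^ (t - u) := by
      refine Finset.sum_le_sum fun u hu => ?_
      have hu1 : 1 ≤ u := (Finset.mem_Ioc.mp hu).1
      have hsq : (1 : ℝ) ≤ Real.sqrt u := by
        rw [Real.one_le_sqrt]
        exact_mod_cast hu1
      refine mul_le_mul_of_nonneg_right ?_ (pow_nonneg hβ0.le _)
      exact div_le_self hη₀.le hsq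
    refine step1.trans ?_
    rw [← Finset.mul_sum]
    have htail := tail_sum β hβ0.le hβ1 0 (t / 2) t (Nat.zero_le _) (by omega)
    calc η₀ * ∑ u ∈ Finset.Ioc 0 (t / 2), β ^ (t - u)
        ≤ η₀ * (β ^ (t - t / 2) / (1 - β)) :=
          mul_le_mul_of_nonneg_left htail hη₀.le
      _ ≤ η₀ * (β ^ (t / 2) / (1 - β)) := by
          refine mul_le_mul_of_nonneg_left ?_ hη₀.le
          refine div_le_div_of_nonneg_right ?_ h1β.le
          exact pow_le_pow_of_le_one hβ0.le hβ1.le (by omega)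
      _ = η₀ / (1 - β) * β ^ (t / 2) := by ring
  have hb2 : ∑ u ∈ Finset.Ioc (t / 2) (t - 1), (η₀ / Real.sqrt u) * β ^ (t - u)
      ≤ Real.sqrt 2 * η₀ * β / (1 - β) * (1 / Real.sqrt t) := by
    have ht0 : (0 : ℝ) < Real.sqrt t := Real.sqrt_pos.mpr (by positivity)
    have step1 : ∑ u ∈ Finset.Ioc (t / 2) (t - 1), (η₀ / Real.sqrt u) * β ^ (t - u)
        ≤ ∑ u ∈ Finset.Ioc (t / 2) (t - 1), (Real.sqrt 2 * η₀ / Real.sqrt t) * β ^ (t - u) := by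
      refine Finset.sum_le_sum fun u hu => ?_
      obtain ⟨hul, hur⟩ := Finset.mem_Ioc.mp hu
      have hu0 : (0 : ℝ) < Real.sqrt u := Real.sqrt_pos.mpr (by exact_mod_cast (by omega : 0 < u))
      refine mul_le_mul_of_nonneg_right ?_ (pow_nonneg hβ0.le _)
      rw [div_le_div_iff₀ hu0 ht0]
      have h2u : (t : ℝ) ≤ 2 * u := by
        have : t ≤ 2 * u := by omega
        exact_mod_cast this
      calc η₀ * Real.sqrt t ≤ η₀ * Real.sqrt (2 * u) := by
            refine mul_le_mul_of_nonneg_left (Real.sqrt_le_sqrt h2u) hη₀.le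
        _ = Real.sqrt 2 * η₀ * Real.sqrt u := by
            rw [Real.sqrt_mul (by norm_num)]
            ring
    refine step1.trans ?_
    rw [← Finset.mul_sum]
    have htail := tail_sum β hβ0.le hβ1 (t / 2) (t - 1) t hmt (by omega)
    have hexp : t - (t - 1) = 1 := by omega
    rw [hexp] at htail
    calc Real.sqrt 2 * η₀ / Real.sqrt t * ∑ u ∈ Finset.Ioc (t / 2) (t - 1), β ^ (t - u)
        ≤ Real.sqrt 2 * η₀ / Real.sqrt t * (β ^ 1 / (1 - β)) := by
          refine mul_le_mul_of_nonneg_left htail (by positivity)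
      _ = Real.sqrt 2 * η₀ * β / (1 - β) * (1 / Real.sqrt t) := by
          rw [pow_one]; field_simp
  exact add_le_add hb1 hb2
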